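/- arXiv:2508.12924 — 4 statements merged into one kernel-verified Lean document; each statement's English description precedes it below -/
import Mathlib

section
/- For every positive integer n, the map ψ⁺ sending the necklace ⟨s⟩ to the necklace inversion class [Ξ(s)] is a well-defined bijection from Ñ⁺(n) onto N̄(n); that is: (i) if s and s′ generate the same necklace in Ñ⁺(n), then Ξ(s) and Ξ(s′) lie in the same necklace inversion class; (ii) for every ⟨s⟩ ∈ Ñ⁺(n), the string Ξ(s) is primitive of length n; and (iii) every class in N̄(n) equals [Ξ(s)] for exactly one necklace ⟨s⟩ ∈ Ñ⁺(n). -/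
open Finset

namespace Necklaces

variable {n : ℕ}

/-- The cyclic left shift `L` on binary strings of length `n`. -/
def shiftL (s : Fin n → Bool) : Fin n → Bool :=
  fun i => s ⟨(i.val + 1) % n, Nat.mod_lt _ (Nat.lt_of_le_of_lt (Nat.zero_le _) i.isLt)⟩

/-- Digitwise inversion (complement) `ι`. -/
def inv (s : Fin n → Bool) : Fin n → Bool := fun i => !(s i)

/-- A string is primitive if no nontrivial cyclic shift fixes it. -/
def Primitive (s : Fin n → Bool) : Prop :=
  ∀ k : ℕ, 0 < k → k < n → shiftL^[k] s ≠ s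

/-- The necklace `⟨s⟩`: the orbit of `s` under cyclic shifts. -/
def necklace (s : Fin n → Bool) : Set (Fin n → Bool) :=
  {t | ∃ k : ℕ, t = shiftL^[k] s}

/-- The necklace inversion class `[s]`: the orbit of `s` under cyclic shifts and inversion. -/
def invClass (s : Fin n → Bool) : Set (Fin n → Bool) :=
  {t | ∃ k : ℕ, t = shiftL^[k] s ∨ t = inv (shiftL^[k] s)}

/-- The number of 1's in `s`. -/
def onesCard (s : Fin n → Bool) : ℕ := (univ.filter (fun i => s i = true)).card

/-- The mod-2 partial sum map `Ξ`: the `i`-th digit of `Ξ(s)` is `s₁+⋯+sᵢ (mod 2)`. -/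
def xi (s : Fin n → Bool) : Fin n → Bool :=
  fun i => decide (Odd ((Finset.Iic i).filter (fun j => s j = true)).card)

/-- `ι(s)` is a cyclic shift of `s`. -/
def ReflexiveStr (s : Fin n → Bool) : Prop := ∃ k : ℕ, shiftL^[k] s = inv s

/-- `s` consists of two copies of a primitive string of length `n/2`
with an odd number of 1's. -/
def TwoCopies (s : Fin n → Bool) : Prop :=
  n % 2 = 0 ∧ shiftL^[n / 2] s = s ∧ (∀ k : ℕ, 0 < k → k < n / 2 → shiftL^[k] s ≠ s) ∧
    Odd ((univ.filter (fun i : Fin n => i.val < n / 2 ∧ s i = true)).card)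

/-- `s` generates a necklace belonging to `Ñ⁺(n)`. -/
def GoodPlus (s : Fin n → Bool) : Prop :=
  (Primitive s ∧ Even (onesCard s)) ∨ TwoCopies s

/-- The set `Ñ⁺(n)` of necklaces. -/
def NtildePlus (n : ℕ) : Set (Set (Fin n → Bool)) :=
  {N | ∃ s : Fin n → Bool, GoodPlus s ∧ N = necklace s}

/-- The set `N̄(n)` of necklace inversion classes of primitive strings. -/
def Nbar (n : ℕ) : Set (Set (Fin n → Bool)) :=
  {C | ∃ s : Fin n → Bool, Primitive s ∧ C = invClass s}

/-- Lexicographic order on strings, with `0 < 1` and the leftmost digit most significant. -/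
def strLt (s t : Fin n → Bool) : Prop :=
  ∃ i : Fin n, (∀ j : Fin n, j < i → s j = t j) ∧ s i < t i

/-- Extended lexicographic order on extended strings `s^b`
(`b = false` encodes `−`, `b = true` encodes `+`). -/
def extLt (p q : (Fin n → Bool) × Bool) : Prop :=
  strLt p.1 q.1 ∨ (p.1 = q.1 ∧ p.2 < q.2)

/-- The twisted shift operator `F`. -/
def twistF (s : Fin n → Bool) : Fin n → Bool :=
  if h : 0 < n then
    (if shiftL s ⟨0, h⟩ = true then shiftL s else inv (shiftL s))
  else s

/-- The extended twisted shift operator `F̃`. -/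
def extF (p : (Fin n → Bool) × Bool) : (Fin n → Bool) × Bool :=
  if h : 0 < n then
    (if twistF p.1 ⟨n - 1, Nat.sub_lt h Nat.one_pos⟩ = true then (twistF p.1, p.2)
     else (twistF p.1, !p.2))
  else p

/-- Cyclic successor on `Fin n`. -/
def finSucc (i : Fin n) : Fin n :=
  ⟨(i.val + 1) % n, Nat.mod_lt _ (Nat.lt_of_le_of_lt (Nat.zero_le _) i.isLt)⟩

open scoped Classical in
/-- The (0-based) lexicographic rank of `μ i` among `μ₁,…,μₙ`:
the number of indices `j` with `μ j` strictly smaller than `μ i`. -/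
noncomputable def rankOf {X : Type*} (lt : X → X → Prop) (μ : Fin n → X) (i : Fin n) : ℕ :=
  (univ.filter (fun j => lt (μ j) (μ i))).card

/-- `σ` is the cyclic permutation `(r₁ r₂ ⋯ rₙ)` built from the ranks `rᵢ` of `μᵢ`:
`σ(rᵢ) = r_{i+1}` (indices mod `n`). -/
def BuiltFrom {X : Type*} (lt : X → X → Prop) (μ : Fin n → X) (σ : Equiv.Perm (Fin n)) : Prop :=
  ∀ i j : Fin n, rankOf lt μ i = j.val → (σ j).val = rankOf lt μ (finSucc i)

/-- `σ` consists of a single `n`-cycle. -/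
def IsCyclicPerm (σ : Equiv.Perm (Fin n)) : Prop :=
  ∀ x y : Fin n, ∃ k : ℕ, (σ ^ k) x = y

/-- `σ` is unimodal: decreasing on an initial segment, then increasing. -/
def IsUnimodal (σ : Equiv.Perm (Fin n)) : Prop :=
  ∃ m : Fin n, (∀ i j : Fin n, i ≤ j → j ≤ m → σ j ≤ σ i) ∧
    (∀ i j : Fin n, m ≤ i → i ≤ j → σ i ≤ σ j)

/-- Cyclic unimodal permutations. -/
def CUPperm (σ : Equiv.Perm (Fin n)) : Prop := IsCyclicPerm σ ∧ IsUnimodal σ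

/-- The string `A(σ)` obtained from the itinerary of `σ` (`+ ↦ 0`, `− ↦ 1`),
with the last digit chosen so that the total number of 1's is even.
(Here `m = σ⁻¹ 0` is the unique element with `σ m` least.) -/
def Astr [NeZero n] (σ : Equiv.Perm (Fin n)) : Fin n → Bool :=
  fun i =>
    if i.val + 1 < n then decide ((σ ^ (i.val + 1)) (σ⁻¹ 0) < σ⁻¹ 0)
    else decide (Odd ((univ.filter (fun j : Fin n =>
      j.val + 1 < n ∧ (σ ^ (j.val + 1)) (σ⁻¹ 0) < σ⁻¹ 0)).card))

/-- The string used for `Ψ(σ)`: itinerary digits with the last digit chosen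
so that the total number of 1's is odd. -/
def BstrOdd [NeZero n] (σ : Equiv.Perm (Fin n)) : Fin n → Bool :=
  fun i =>
    if i.val + 1 < n then decide ((σ ^ (i.val + 1)) (σ⁻¹ 0) < σ⁻¹ 0)
    else !(decide (Odd ((univ.filter (fun j : Fin n =>
      j.val + 1 < n ∧ (σ ^ (j.val + 1)) (σ⁻¹ 0) < σ⁻¹ 0)).card)))

/-- The itinerary of a cyclic unimodal permutation: `none` encodes `⋆` (position `n`),
`some true` encodes `−` (i.e. `σⁱ(m) < m`), `some false` encodes `+` (i.e. `σⁱ(m) > m`). -/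
def itin [NeZero n] (σ : Equiv.Perm (Fin n)) : Fin n → Option Bool :=
  fun i =>
    if i.val + 1 = n then none
    else some (decide ((σ ^ (i.val + 1)) (σ⁻¹ 0) < σ⁻¹ 0))

/-- `σ` arises from the class `C` by the construction defining `λ`:
for some representative `t` of `C` beginning with `1`, `σ` is the cyclic permutation
built from the lexicographic ranks of the iterates of `t` under `F` (non-reflexive case)
or of `t^−` under `F̃` (reflexive case). -/
def LamRel [NeZero n] (C : Set (Fin n → Bool)) (σ : Equiv.Perm (Fin n)) : Prop :=
  ∃ t : Fin n → Bool, t 0 = true ∧ C = invClass t ∧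
    ((¬ ReflexiveStr t ∧ BuiltFrom strLt (fun i : Fin n => twistF^[i.val] t) σ) ∨
     (ReflexiveStr t ∧ BuiltFrom extLt (fun i : Fin n => extF^[i.val] (t, false)) σ))

/-- `σ` arises from the representative `s` by the Weiss–Rogers construction `Φ`:
`σ` is the cyclic permutation built from the lexicographic ranks of
`νᵢ = ι(Ξ(L^{i-1}(s)))`. -/
def PhiBuilt (s : Fin n → Bool) (σ : Equiv.Perm (Fin n)) : Prop :=
  BuiltFrom strLt (fun i : Fin n => inv (xi (shiftL^[i.val] s))) σ

end Necklaces

namespace Necklaces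

section Aux
variable {n : ℕ} [NeZero n]
set_option linter.unusedSectionVars false
set_option linter.unusedVariables false

variable [NeZero n]
open Fin.CommRing

lemma shiftL_apply (s : Fin n → Bool) (i : Fin n) : shiftL s i = s (i + 1) := by
  unfold shiftL
  congr 1
  ext
  simp only [Fin.add_def, Fin.val_one']
  rw [Nat.add_mod, Nat.mod_eq_of_lt i.isLt]

lemma shiftL_iter (s : Fin n → Bool) (k : ℕ) (i : Fin n) :
    shiftL^[k] s i = s (i + (k : Fin n)) := by
  induction k generalizing s with
  | zero => simp
  | succ m ih =>
      rw [Function.iterate_succ_apply, ih (shiftL s), shiftL_apply]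
      congr 1
      push_cast
      ring

lemma shiftL_iter_n (s : Fin n → Bool) : shiftL^[n] s = s := by
  funext i
  rw [shiftL_iter]
  simp

lemma shiftL_iter_mul (s : Fin n → Bool) (q : ℕ) : shiftL^[n * q] s = s := by
  induction q with
  | zero => simp
  | succ m ih =>
      rw [Nat.mul_succ, Function.iterate_add_apply, shiftL_iter_n, ih]

lemma inv_inv (s : Fin n → Bool) : inv (inv s) = s := by
  funext i; simp [inv]

lemma inv_shiftL_iter (s : Fin n → Bool) (k : ℕ) :
    inv (shiftL^[k] s) = shiftL^[k] (inv s) := by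
  funext i
  simp [inv, shiftL_iter]

/-- key arithmetic: given j k, find m with shiftL^[m] (shiftL^[k] s) = shiftL^[j] s -/
lemma shift_undo (s : Fin n → Bool) (j k : ℕ) :
    ∃ m : ℕ, shiftL^[m] (shiftL^[k] s) = shiftL^[j] s := by
  have hn : 0 < n := Nat.pos_of_ne_zero (NeZero.ne n)
  refine ⟨j + (n - k % n), ?_⟩
  rw [← Function.iterate_add_apply]
  have h1 : n * (k / n) + k % n = k := Nat.div_add_mod k n
  have h2 : k % n < n := Nat.mod_lt _ hn
  set e := n * (k / n) with he
  have : j + (n - k % n) + k = j + (n + e) := by omega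
  rw [this, Function.iterate_add_apply, Function.iterate_add_apply, shiftL_iter_mul,
    shiftL_iter_n]

lemma necklace_shift (s : Fin n → Bool) (k : ℕ) :
    necklace (shiftL^[k] s) = necklace s := by
  ext t
  constructor
  · rintro ⟨j, rfl⟩
    exact ⟨j + k, by rw [Function.iterate_add_apply]⟩
  · rintro ⟨j, rfl⟩
    obtain ⟨m, hm⟩ := shift_undo s j k
    exact ⟨m, hm.symm⟩

lemma necklace_eq_of_mem {s t : Fin n → Bool} (h : t ∈ necklace s) :
    necklace t = necklace s := by
  obtain ⟨k, rfl⟩ := h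
  exact necklace_shift s k

lemma invClass_shift (s : Fin n → Bool) (k : ℕ) :
    invClass (shiftL^[k] s) = invClass s := by
  ext t
  constructor
  · rintro ⟨j, h | h⟩ <;>
    · exact ⟨j + k, by rw [Function.iterate_add_apply]; tauto⟩
  · rintro ⟨j, h | h⟩ <;>
    · obtain ⟨m, hm⟩ := shift_undo s j k
      exact ⟨m, by rw [hm]; tauto⟩

lemma invClass_inv (s : Fin n → Bool) : invClass (inv s) = invClass s := by
  ext t
  constructor
  · rintro ⟨j, h | h⟩
    · exact ⟨j, Or.inr (by rw [h, ← inv_shiftL_iter])⟩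
    · exact ⟨j, Or.inl (by rw [h, ← inv_shiftL_iter, inv_inv])⟩
  · rintro ⟨j, h | h⟩
    · exact ⟨j, Or.inr (by rw [h, ← inv_shiftL_iter, inv_inv])⟩
    · exact ⟨j, Or.inl (by rw [h, ← inv_shiftL_iter])⟩

lemma invClass_eq_of_mem {s t : Fin n → Bool} (h : t ∈ invClass s) :
    invClass t = invClass s := by
  obtain ⟨k, h | h⟩ := h
  · rw [h, invClass_shift]
  · rw [h, invClass_inv, invClass_shift]

lemma mem_invClass_self (s : Fin n → Bool) : s ∈ invClass s := ⟨0, Or.inl rfl⟩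

lemma mem_necklace_self (s : Fin n → Bool) : s ∈ necklace s := ⟨0, rfl⟩

lemma fin_mk_sub_one (m : ℕ) (h : m + 1 < n) :
    (⟨m + 1, h⟩ : Fin n) - 1 = ⟨m, by omega⟩ := by
  ext
  rw [Fin.sub_def]
  simp only [Fin.val_one']
  have h1 : 1 % n = 1 := Nat.mod_eq_of_lt (by omega)
  rw [h1]
  show (n - 1 + (m + 1)) % n = m
  have : n - 1 + (m + 1) = n + m := by omega
  rw [this, Nat.add_mod_left, Nat.mod_eq_of_lt (by omega)]

lemma fin_zero_sub_one (hn : 0 < n) : (0 : Fin n) - 1 = ⟨n - 1, by omega⟩ := by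
  ext
  rw [Fin.sub_def]
  simp only [Fin.val_one', Fin.val_zero]
  show (n - 1 % n + 0) % n = n - 1
  rcases Nat.eq_or_lt_of_le (Nat.one_le_iff_ne_zero.mpr hn.ne') with h | h
  · simp [← h]
  · rw [Nat.mod_eq_of_lt h, Nat.add_zero, Nat.mod_eq_of_lt (by omega)]


lemma xi_zero (s : Fin n → Bool) : xi s 0 = s 0 := by
  have h : Finset.Iic (0 : Fin n) = {0} := by
    ext j
    simp [Fin.le_zero_iff]
  unfold xi
  rw [h]
  cases hs : s 0 <;> simp [Finset.filter_singleton, hs]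

lemma xi_succ (s : Fin n → Bool) (m : ℕ) (h : m + 1 < n) :
    xi s ⟨m + 1, h⟩ = xor (xi s ⟨m, by omega⟩) (s ⟨m + 1, h⟩) := by
  have hIic : Finset.Iic (⟨m + 1, h⟩ : Fin n) =
      insert ⟨m + 1, h⟩ (Finset.Iic (⟨m, by omega⟩ : Fin n)) := by
    ext j
    simp only [Finset.mem_Iic, Finset.mem_insert, Fin.le_def, Fin.ext_iff]
    omega
  have hnot : (⟨m + 1, h⟩ : Fin n) ∉ Finset.Iic (⟨m, by omega⟩ : Fin n) := by
    simp [Fin.le_def]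
  unfold xi
  rw [hIic, Finset.filter_insert]
  cases hs : s ⟨m + 1, h⟩
  · simp
  · rw [if_pos rfl, Finset.card_insert_of_notMem (fun hmem => hnot (Finset.mem_filter.mp hmem).1)]
    simp only [hs, Bool.xor_true, Nat.odd_add_one, Nat.not_odd_iff_even, decide_eq_true_eq]
    rw [← decide_not, decide_eq_decide]
    exact Nat.not_odd_iff_even.symm

lemma xi_last (s : Fin n → Bool) (hn : 0 < n) :
    xi s ⟨n - 1, by omega⟩ = decide (Odd (onesCard s)) := by
  have h : Finset.Iic (⟨n - 1, by omega⟩ : Fin n) = univ := by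
    ext j
    simp only [Finset.mem_Iic, Finset.mem_univ, iff_true, Fin.le_def]
    omega
  unfold xi onesCard
  rw [h]

def der (s : Fin n → Bool) : Fin n → Bool := fun i => xor (s i) (s (i - 1))

lemma der_inv (s : Fin n → Bool) : der (inv s) = der s := by
  funext i
  simp only [der, inv]
  cases s i <;> cases s (i - 1) <;> rfl

lemma der_shiftL (s : Fin n → Bool) : der (shiftL s) = shiftL (der s) := by
  funext i
  simp only [der, shiftL_apply]
  congr 2
  abel

lemma der_shiftL_iter (s : Fin n → Bool) (k : ℕ) :
    der (shiftL^[k] s) = shiftL^[k] (der s) := by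
  induction k generalizing s with
  | zero => rfl
  | succ m ih =>
      rw [Function.iterate_succ_apply, ih, Function.iterate_succ_apply, der_shiftL]

/-- F1 : left inverse on even-weight strings. -/
lemma der_xi (s : Fin n → Bool) (hs : Even (onesCard s)) : der (xi s) = s := by
  have hn : 0 < n := Nat.pos_of_ne_zero (NeZero.ne n)
  funext i
  obtain ⟨m, hm⟩ := i
  match m with
  | 0 =>
      have h0 : (⟨0, hm⟩ : Fin n) = 0 := rfl
      simp only [der, h0, fin_zero_sub_one hn, xi_zero, xi_last s hn]
      rw [decide_eq_false (Nat.not_odd_iff_even.mpr hs)]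
      cases s 0 <;> rfl
  | m + 1 =>
      simp only [der, fin_mk_sub_one m hm, xi_succ s m hm]
      cases xi s ⟨m, by omega⟩ <;> cases s ⟨m + 1, hm⟩ <;> rfl

/-- F2 : pointwise description of `xi (der t)`. -/
lemma xi_der (t : Fin n → Bool) (i : Fin n) :
    xi (der t) i = xor (t i) (t ⟨n - 1, Nat.sub_lt (Nat.pos_of_ne_zero (NeZero.ne n)) Nat.one_pos⟩) := by
  have hn : 0 < n := Nat.pos_of_ne_zero (NeZero.ne n)
  obtain ⟨m, hm⟩ := i
  induction m with
  | zero =>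
      have h0 : (⟨0, hm⟩ : Fin n) = 0 := rfl
      rw [h0, xi_zero]
      simp only [der, fin_zero_sub_one hn]
  | succ m ih =>
      rw [xi_succ _ m hm, ih (by omega)]
      simp only [der, fin_mk_sub_one m hm]
      cases t ⟨m, by omega⟩ <;> cases t ⟨m + 1, hm⟩ <;> cases t ⟨n - 1, by omega⟩ <;> rfl

/-- F5 : der is 2-to-1. -/
lemma der_eq_der (u v : Fin n → Bool) (h : der u = der v) : u = v ∨ u = inv v := by
  have hn : 0 < n := Nat.pos_of_ne_zero (NeZero.ne n)
  have key : ∀ m (hm : m < n), xor (u ⟨m, hm⟩) (v ⟨m, hm⟩) = xor (u 0) (v 0) := by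
    intro m
    induction m with
    | zero => intro hm; rfl
    | succ m ih =>
        intro hm
        have hd := congrFun h ⟨m + 1, hm⟩
        simp only [der, fin_mk_sub_one m hm] at hd
        have := ih (by omega)
        revert hd this
        cases u ⟨m + 1, hm⟩ <;> cases v ⟨m + 1, hm⟩ <;> cases u ⟨m, by omega⟩ <;>
          cases v ⟨m, by omega⟩ <;> cases u 0 <;> cases v 0 <;> simp
  cases hc : xor (u 0) (v 0)
  · left
    funext i
    obtain ⟨m, hm⟩ := i
    have := key m hm
    rw [hc] at this
    revert this
    cases u ⟨m, hm⟩ <;> cases v ⟨m, hm⟩ <;> simp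
  · right
    funext i
    obtain ⟨m, hm⟩ := i
    have := key m hm
    rw [hc] at this
    simp only [inv]
    revert this
    cases u ⟨m, hm⟩ <;> cases v ⟨m, hm⟩ <;> simp

lemma onesCard_shiftL (s : Fin n → Bool) : onesCard (shiftL s) = onesCard s := by
  unfold onesCard
  apply Finset.card_equiv (Equiv.addRight (1 : Fin n))
  intro i
  simp [shiftL_apply]

lemma onesCard_shiftL_iter (s : Fin n → Bool) (k : ℕ) :
    onesCard (shiftL^[k] s) = onesCard s := by
  induction k generalizing s with
  | zero => rfl
  | succ m ih => rw [Function.iterate_succ_apply, ih, onesCard_shiftL]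

lemma period_mul (s : Fin n → Bool) (a q : ℕ) (ha : shiftL^[a] s = s) :
    shiftL^[a * q] s = s := by
  induction q with
  | zero => simp
  | succ m ih => rw [Nat.mul_succ, Function.iterate_add_apply, ha, ih]

lemma period_mod (s : Fin n → Bool) (a b : ℕ) (hb : 0 < b)
    (ha : shiftL^[a] s = s) (hbp : shiftL^[b] s = s) : shiftL^[a % b] s = s := by
  have h : a = b * (a / b) + a % b := (Nat.div_add_mod a b).symm
  calc shiftL^[a % b] s = shiftL^[a % b] (shiftL^[b * (a / b)] s) := by
        rw [period_mul s b (a/b) hbp]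
    _ = shiftL^[a % b + b * (a / b)] s := by rw [← Function.iterate_add_apply]
    _ = s := by rw [show a % b + b * (a/b) = a by omega, ha]

lemma period_gcd (s : Fin n → Bool) :
    ∀ a b : ℕ, shiftL^[a] s = s → shiftL^[b] s = s → shiftL^[Nat.gcd a b] s = s := by
  intro a
  induction a using Nat.strong_induction_on with
  | _ a ih =>
    intro b ha hb
    match a, ha with
    | 0, ha => simpa using hb
    | (m+1), ha =>
        rw [Nat.gcd_rec]
        exact ih (b % (m+1)) (Nat.mod_lt _ (Nat.succ_pos m)) (m+1)
          (period_mod s b (m+1) (Nat.succ_pos m) hb ha) ha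

lemma xi_at (s : Fin n → Bool) (m : ℕ) (h : m + 1 < n) :
    xi s ⟨m + 1, h⟩ =
      xor (decide (Odd ((univ.filter (fun i : Fin n => i.val < m + 1 ∧ s i = true)).card)))
        (s ⟨m + 1, h⟩) := by
  have hset : (Finset.Iic (⟨m, by omega⟩ : Fin n)).filter (fun j => s j = true) =
      univ.filter (fun i : Fin n => i.val < m + 1 ∧ s i = true) := by
    ext j
    simp only [Finset.mem_filter, Finset.mem_Iic, Finset.mem_univ, true_and, Fin.le_def]
    constructor <;> rintro ⟨h1, h2⟩ <;> exact ⟨by omega, h2⟩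
  rw [xi_succ s m h]
  unfold xi
  rw [hset]

lemma eval_period (s : Fin n → Bool) (d : ℕ) (hd0 : 0 < d) (hdn : d < n)
    (hper : shiftL^[d] s = s) :
    shiftL^[d] (xi s) 0 =
      xor (decide (Odd ((univ.filter (fun i : Fin n => i.val < d ∧ s i = true)).card)))
        (xi s 0) := by
  obtain ⟨m, rfl⟩ : ∃ m, d = m + 1 := ⟨d - 1, by omega⟩
  have h0d : ((0 : Fin n) + ((m+1 : ℕ) : Fin n)) = ⟨m + 1, hdn⟩ := by
    ext
    simp only [Fin.add_def, Fin.val_zero, Fin.val_natCast, Nat.zero_add]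
    rw [Nat.mod_eq_of_lt hdn, Nat.mod_eq_of_lt hdn]
  have hs0 : s ⟨m + 1, hdn⟩ = s 0 := by
    have := congrFun hper 0
    rw [shiftL_iter, h0d] at this
    exact this
  rw [shiftL_iter, h0d, xi_at s m hdn, hs0, xi_zero]

lemma twoCopies_even (s : Fin n → Bool) (h : TwoCopies s) : Even (onesCard s) := by
  obtain ⟨hmod, hper, _, _⟩ := h
  have hn : 0 < n := Nat.pos_of_ne_zero (NeZero.ne n)
  set d := n / 2 with hd
  have hn2 : n = 2 * d := by omega
  have hd0 : 0 < d := by omega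
  have hdn : d < n := by omega
  have hvald : ((d : ℕ) : Fin n).val = d := by
    rw [Fin.val_natCast, Nat.mod_eq_of_lt hdn]
  have hsper : ∀ i : Fin n, s (i + (d : Fin n)) = s i := by
    intro i
    have := congrFun hper i
    rwa [shiftL_iter] at this
  have hsplit :
      ((univ.filter (fun i : Fin n => i.val < d ∧ s i = true)).card) +
        ((univ.filter (fun i : Fin n => ¬ i.val < d ∧ s i = true)).card) = onesCard s := by
    unfold onesCard
    have key := Finset.card_filter_add_card_filter_not
      (s := univ.filter (fun i : Fin n => s i = true)) (p := fun i : Fin n => i.val < d)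
    rw [Finset.filter_filter, Finset.filter_filter] at key
    have e1 : univ.filter (fun i : Fin n => s i = true ∧ i.val < d) =
        univ.filter (fun i : Fin n => i.val < d ∧ s i = true) := by
      ext i; simp only [Finset.mem_filter]; tauto
    have e2 : univ.filter (fun i : Fin n => s i = true ∧ ¬ i.val < d) =
        univ.filter (fun i : Fin n => ¬ i.val < d ∧ s i = true) := by
      ext i; simp only [Finset.mem_filter]; tauto
    rw [e1, e2] at key
    exact key
  have hcard :
      ((univ.filter (fun i : Fin n => i.val < d ∧ s i = true)).card) =
        ((univ.filter (fun i : Fin n => ¬ i.val < d ∧ s i = true)).card) := by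
    apply Finset.card_equiv (Equiv.addRight ((d : ℕ) : Fin n))
    intro i
    simp only [Finset.mem_filter, Finset.mem_univ, true_and, Equiv.coe_addRight]
    have hval : ((i + (d : Fin n)).val) = (i.val + d) % n := by
      rw [Fin.add_def, hvald]
    constructor
    · rintro ⟨hi, hsi⟩
      have : (i + (d : Fin n)).val = i.val + d := by
        rw [hval, Nat.mod_eq_of_lt (by omega)]
      refine ⟨by omega, by rw [hsper i]; exact hsi⟩
    · rintro ⟨hi, hsi⟩
      rw [hval] at hi
      have hlt : i.val < d := by
        rcases Nat.lt_or_ge i.val d with h' | h'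
        · exact h'
        · exfalso
          have : (i.val + d) % n = i.val + d - n := by
            rw [Nat.mod_eq_sub_mod (by omega), Nat.mod_eq_of_lt (by omega)]
          omega
      exact ⟨hlt, by rw [← hsper i]; exact hsi⟩
  rw [← hsplit, ← hcard]
  exact ⟨_, rfl⟩

lemma goodPlus_even (s : Fin n → Bool) (h : GoodPlus s) : Even (onesCard s) := by
  rcases h with ⟨_, he⟩ | h2
  · exact he
  · exact twoCopies_even s h2

lemma primitive_inv (t : Fin n → Bool) (h : Primitive t) : Primitive (inv t) := by
  intro k hk0 hkn heq
  apply h k hk0 hkn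
  have := congrArg inv heq
  rwa [inv_shiftL_iter, inv_inv] at this

lemma primitive_mod_period (u : Fin n → Bool) (hp : Primitive u) (k : ℕ)
    (hper : shiftL^[k] u = u) : k % n = 0 := by
  have hn : 0 < n := Nat.pos_of_ne_zero (NeZero.ne n)
  by_contra h
  have h1 : shiftL^[k % n] u = u := period_mod u k n hn hper (shiftL_iter_n u)
  exact hp (k % n) (Nat.pos_of_ne_zero h) (Nat.mod_lt _ hn) h1

/-- `Ξ` intertwines the shift up to inversion. -/
lemma xi_shiftL (s : Fin n → Bool) (he : Even (onesCard s)) :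
    xi (shiftL s) = shiftL (xi s) ∨ xi (shiftL s) = inv (shiftL (xi s)) := by
  apply der_eq_der
  have h1 : der (xi (shiftL s)) = shiftL s := by
    apply der_xi
    rw [onesCard_shiftL]
    exact he
  have h2 : der (shiftL (xi s)) = shiftL s := by
    rw [der_shiftL, der_xi s he]
  rw [h1, h2]

lemma twoCopies_period_eq (s : Fin n → Bool) (h : TwoCopies s) (k : ℕ)
    (hk0 : 0 < k) (hkn : k < n) (hper : shiftL^[k] s = s) : k = n / 2 := by
  obtain ⟨hmod, hper2, hmin, _⟩ := h
  have hn : 0 < n := Nat.pos_of_ne_zero (NeZero.ne n)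
  set d := n / 2 with hd
  have hn2 : n = 2 * d := by omega
  set g := Nat.gcd k n with hg
  have hgper : shiftL^[g] s = s := period_gcd s k n hper (shiftL_iter_n s)
  have hg0 : 0 < g := Nat.gcd_pos_of_pos_left n hk0
  have hgk : g ∣ k := Nat.gcd_dvd_left k n
  have hgn : g ∣ n := Nat.gcd_dvd_right k n
  have hglt : g < n := Nat.lt_of_le_of_lt (Nat.le_of_dvd hk0 hgk) hkn
  have hgd : g = d := by
    have hge : ¬ g < d := fun hlt => hmin g hg0 hlt hgper
    obtain ⟨c, hc⟩ := hgn
    have hc0 : c ≠ 0 := by rintro rfl; omega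
    have hc1 : c ≠ 1 := by rintro rfl; omega
    have h2g : g * 2 ≤ g * c := Nat.mul_le_mul_left g (by omega)
    omega
  obtain ⟨c, hc⟩ := hgk
  rw [hgd] at hc
  rcases c with _ | _ | c
  · omega
  · omega
  · exfalso
    have hc' : k = d * c + 2 * d := by rw [hc]; ring
    omega

/-- Part (ii) core : `Ξ(s)` is primitive when `s` is good. -/
lemma goodPlus_primitive_xi (s : Fin n → Bool) (h : GoodPlus s) : Primitive (xi s) := by
  intro k hk0 hkn heq
  have he : Even (onesCard s) := goodPlus_even s h
  have hper : shiftL^[k] s = s := by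
    have h1 := congrArg der heq
    rwa [der_shiftL_iter, der_xi s he] at h1
  rcases h with ⟨hp, _⟩ | h2
  · exact hp k hk0 hkn hper
  · have hkd : k = n / 2 := twoCopies_period_eq s h2 k hk0 hkn hper
    obtain ⟨hmod, hper2, hmin, hodd⟩ := h2
    have hev := eval_period s k hk0 hkn hper
    rw [heq] at hev
    rw [hkd] at hev
    rw [decide_eq_true hodd] at hev
    cases xi s 0 <;> simp at hev

/-- converse : even weight with primitive image implies good. -/
lemma even_primitive_goodPlus (s : Fin n → Bool) (he : Even (onesCard s))
    (hp : Primitive (xi s)) : GoodPlus s := by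
  have hn : 0 < n := Nat.pos_of_ne_zero (NeZero.ne n)
  by_cases hps : Primitive s
  · exact Or.inl ⟨hps, he⟩
  right
  have hex : ∃ k : ℕ, 0 < k ∧ k < n ∧ shiftL^[k] s = s := by
    unfold Primitive at hps
    push_neg at hps
    obtain ⟨k, hk0, hkn, hk⟩ := hps
    exact ⟨k, hk0, hkn, hk⟩
  classical
  obtain ⟨hd0, hdn, hdper⟩ := Nat.find_spec hex
  have hdmin : ∀ k : ℕ, 0 < k → k < Nat.find hex → shiftL^[k] s ≠ s := by
    intro k hk0 hkd hk
    exact Nat.find_min hex hkd ⟨hk0, by omega, hk⟩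
  set d := Nat.find hex with hd
  have hder : der (shiftL^[d] (xi s)) = der (xi s) := by
    rw [der_shiftL_iter, der_xi s he, hdper]
  have hcase := der_eq_der _ _ hder
  rcases hcase with hcase | hcase
  · exact absurd hcase (hp d hd0 hdn)
  -- shiftL^[d] (xi s) = inv (xi s)
  have h2d : shiftL^[d + d] (xi s) = xi s := by
    rw [Function.iterate_add_apply, hcase, ← inv_shiftL_iter, hcase, inv_inv]
  have h2dn : d + d = n := by
    have := primitive_mod_period (xi s) hp (d + d) h2d
    have h1 : d + d < 2 * n := by omega
    rcases Nat.lt_or_ge (d + d) n with hlt | hge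
    · rw [Nat.mod_eq_of_lt hlt] at this; omega
    · rcases Nat.eq_or_lt_of_le hge with hEq | hgt
      · omega
      · rw [Nat.mod_eq_sub_mod hge, Nat.mod_eq_of_lt (by omega)] at this
        omega
  have hmod : n % 2 = 0 := by omega
  have hdval : d = n / 2 := by omega
  refine ⟨hmod, by rw [← hdval]; exact hdper, ?_, ?_⟩
  · intro k hk0 hkd hk
    rw [← hdval] at hkd
    exact hdmin k hk0 hkd hk
  · have hev := eval_period s d hd0 hdn hdper
    rw [hcase] at hev
    rw [hdval] at hev
    simp only [inv, xi_zero] at hev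
    rcases Nat.even_or_odd ((univ.filter
        (fun i : Fin n => i.val < n / 2 ∧ s i = true)).card) with hpar | hpar
    · rw [decide_eq_false (by rwa [Nat.not_odd_iff_even])] at hev
      cases s 0 <;> simp at hev
    · exact hpar

lemma invClass_xi_shift (s : Fin n → Bool) (he : Even (onesCard s)) (k : ℕ) :
    invClass (xi (shiftL^[k] s)) = invClass (xi s) := by
  induction k with
  | zero => rfl
  | succ m ih =>
      rw [Function.iterate_succ_apply']
      have hev : Even (onesCard (shiftL^[m] s)) := by rw [onesCard_shiftL_iter]; exact he
      have h1 : shiftL (xi (shiftL^[m] s)) = shiftL^[1] (xi (shiftL^[m] s)) := rfl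
      rcases xi_shiftL (shiftL^[m] s) hev with h | h
      · rw [h, h1, invClass_shift]; exact ih
      · rw [h, invClass_inv, h1, invClass_shift]; exact ih

lemma exists_good_xi (t : Fin n → Bool) (hprim : Primitive t)
    (hlast : t ⟨n - 1, Nat.sub_lt (Nat.pos_of_ne_zero (NeZero.ne n)) Nat.one_pos⟩ = false) :
    ∃ s : Fin n → Bool, GoodPlus s ∧ xi s = t := by
  have hn : 0 < n := Nat.pos_of_ne_zero (NeZero.ne n)
  have hxi : xi (der t) = t := by
    funext i
    rw [xi_der, hlast]
    cases t i <;> rfl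
  have heven : Even (onesCard (der t)) := by
    have := xi_last (der t) hn
    rw [hxi, hlast] at this
    rw [← Nat.not_odd_iff_even]
    intro hodd
    rw [decide_eq_true hodd] at this
    simp at this
  refine ⟨der t, even_primitive_goodPlus (der t) heven (by rwa [hxi]), hxi⟩

end Aux

/-- For every positive integer `n`, the map `ψ⁺` sending the necklace
`⟨s⟩` to the necklace inversion class `[Ξ(s)]` is a well-defined bijection from
`Ñ⁺(n)` onto `N̄(n)`: (i) representative independence, (ii) `Ξ(s)` is primitive,
(iii) every class in `N̄(n)` equals `[Ξ(s)]` for exactly one necklace `⟨s⟩ ∈ Ñ⁺(n)`. -/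
theorem psiPlus_bijective (n : ℕ) (hn : 0 < n) :
    (∀ s s' : Fin n → Bool, GoodPlus s → GoodPlus s' → necklace s = necklace s' →
      invClass (xi s) = invClass (xi s')) ∧
    (∀ s : Fin n → Bool, GoodPlus s → Primitive (xi s)) ∧
    (∀ C ∈ Nbar n, ∃! N : Set (Fin n → Bool),
      N ∈ NtildePlus n ∧
        ∃ s : Fin n → Bool, GoodPlus s ∧ N = necklace s ∧ C = invClass (xi s)) := by
  haveI : NeZero n := ⟨hn.ne'⟩
  refine ⟨?_, fun s hs => goodPlus_primitive_xi s hs, ?_⟩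
  · intro s s' hs hs' hneq
    have hmem : s' ∈ necklace s := by rw [hneq]; exact mem_necklace_self s'
    obtain ⟨k, rfl⟩ := hmem
    exact (invClass_xi_shift s (goodPlus_even s hs) k).symm
  · rintro C ⟨t, hprim, rfl⟩
    obtain ⟨t', hprim', hlast', hclass⟩ : ∃ t', Primitive t' ∧
        t' ⟨n - 1, Nat.sub_lt (Nat.pos_of_ne_zero (NeZero.ne n)) Nat.one_pos⟩ = false ∧
        invClass t' = invClass t := by
      cases hl : t ⟨n - 1, Nat.sub_lt (Nat.pos_of_ne_zero (NeZero.ne n)) Nat.one_pos⟩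
      · exact ⟨t, hprim, hl, rfl⟩
      · exact ⟨inv t, primitive_inv t hprim, by simp [inv, hl], invClass_inv t⟩
    obtain ⟨s, hgood, hxis⟩ := exists_good_xi t' hprim' hlast'
    have hCs : invClass t = invClass (xi s) := by rw [hxis]; exact hclass.symm
    refine ⟨necklace s, ⟨⟨s, hgood, rfl⟩, s, hgood, rfl, hCs⟩, ?_⟩
    rintro N ⟨_, s₁, hgood₁, rfl, hC₁⟩
    have h2 : xi s ∈ invClass (xi s₁) := by
      rw [← hC₁, hCs]; exact mem_invClass_self _
    obtain ⟨k, hk | hk⟩ := h2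
    · have hseq : s = shiftL^[k] s₁ := by
        have := congrArg der hk
        rwa [der_xi s (goodPlus_even s hgood), der_shiftL_iter,
          der_xi s₁ (goodPlus_even s₁ hgood₁)] at this
      rw [hseq]
      exact (necklace_shift s₁ k).symm
    · have hseq : s = shiftL^[k] s₁ := by
        have := congrArg der hk
        rwa [der_xi s (goodPlus_even s hgood), der_inv, der_shiftL_iter,
          der_xi s₁ (goodPlus_even s₁ hgood₁)] at this
      rw [hseq]
      exact (necklace_shift s₁ k).symm

end Necklaces
end

section
/- If s ∈ {0,1}ⁿ is primitive and has an even number of 1's, then Ξ(s) is primitive and ι(Ξ(s)) is not a cyclic shift of Ξ(s); equivalently, the orbit of Ξ(s) under cyclic shifts and inversion has exactly 2n elements. -/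
open Finset

namespace Necklaces

-- auxiliary lemmas
lemma shift_pow (hn : 0 < n) (k : ℕ) (t : Fin n → Bool) (i : Fin n) :
    shiftL^[k] t i = t ⟨(i.val + k) % n, Nat.mod_lt _ hn⟩ := by
  induction k generalizing t with
  | zero => simp [Nat.mod_eq_of_lt i.isLt]
  | succ k ih =>
    rw [Function.iterate_succ_apply, ih]
    show t _ = t _
    congr 1
    ext
    show ((i.val + k) % n + 1) % n = (i.val + (k+1)) % n
    rw [Nat.mod_add_mod, Nat.add_assoc]

lemma shift_mod (hn : 0 < n) (k : ℕ) (t : Fin n → Bool) :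
    shiftL^[k] t = shiftL^[k % n] t := by
  funext i
  rw [shift_pow hn, shift_pow hn]
  congr 1
  ext
  show (i.val + k) % n = (i.val + k % n) % n
  conv_lhs => rw [Nat.add_mod]
  rw [Nat.add_mod i.val (k % n), Nat.mod_mod_of_dvd _ dvd_rfl]

lemma cast_odd_one {c : ℕ} (h : Odd c) : ((c : ZMod 2)) = 1 := by
  rw [← ZMod.natCast_mod]; rw [Nat.odd_iff] at h; rw [h]; rfl

lemma cast_even_zero {c : ℕ} (h : Even c) : ((c : ZMod 2)) = 0 := by
  rw [← ZMod.natCast_mod]; rw [Nat.even_iff] at h; rw [h]; rfl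

lemma odd_iff_cast (c : ℕ) : Odd c ↔ ((c : ZMod 2)) = 1 := by
  constructor
  · exact cast_odd_one
  · intro h
    by_contra hodd
    rw [Nat.not_odd_iff_even] at hodd
    rw [cast_even_zero hodd] at h
    exact absurd h (by decide)

/-- If `s ∈ {0,1}ⁿ` is primitive and has an even number of 1's, then
`Ξ(s)` is primitive and `ι(Ξ(s))` is not a cyclic shift of `Ξ(s)`; equivalently, the orbit
of `Ξ(s)` under cyclic shifts and inversion has exactly `2n` elements. -/
theorem xi_of_primitive_even (n : ℕ) (hn : 0 < n) (s : Fin n → Bool)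
    (hprim : Primitive s) (heven : Even (onesCard s)) :
    Primitive (xi s) ∧ (∀ k : ℕ, shiftL^[k] (xi s) ≠ inv (xi s)) ∧
      (invClass (xi s)).ncard = 2 * n := by
  classical
  set a : Fin n → ZMod 2 := fun j => if s j then 1 else 0 with ha
  set U : Fin n → ZMod 2 := fun i => ∑ j ∈ Finset.Iic i, a j with hUdef
  -- xi in terms of U
  have hxi : ∀ i, xi s i = decide (U i = 1) := by
    intro i
    show decide _ = decide _
    rw [decide_eq_decide, odd_iff_cast, Finset.card_filter]
    push_cast
    rfl
  -- U at the last index is 0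
  have hlast : U ⟨n - 1, by omega⟩ = 0 := by
    have huniv : Finset.Iic (⟨n - 1, by omega⟩ : Fin n) = Finset.univ := by
      ext j; simp [Fin.le_def]; omega
    have : U ⟨n - 1, by omega⟩ = ((onesCard s : ℕ) : ZMod 2) := by
      rw [hUdef]
      show ∑ j ∈ _, a j = _
      rw [huniv, onesCard, Finset.card_filter]
      push_cast
      rfl
    rw [this, cast_even_zero heven]
  -- the step identity: a m = U m + U (m-1 cyclically)
  have hstep : ∀ m : Fin n, a m = U m + U ⟨(m.val + (n-1)) % n, Nat.mod_lt _ hn⟩ := by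
    intro m
    rcases Nat.eq_zero_or_pos m.val with hm | hm
    · have hidx : (⟨(m.val + (n-1)) % n, Nat.mod_lt _ hn⟩ : Fin n) = ⟨n-1, by omega⟩ := by
        ext; show (m.val + (n-1)) % n = n - 1
        rw [hm]; simp [Nat.mod_eq_of_lt (by omega : n - 1 < n)]
      have hsing : Finset.Iic m = {m} := by
        ext j
        simp only [Finset.mem_Iic, Finset.mem_singleton, Fin.le_def, Fin.ext_iff]
        omega
      rw [hidx, hlast, add_zero, hUdef]
      show a m = ∑ j ∈ _, a j
      rw [hsing, Finset.sum_singleton]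
    · obtain ⟨v, hv⟩ : ∃ v, m.val = v + 1 := ⟨m.val - 1, by omega⟩
      have hvlt : v < n := by have := m.isLt; omega
      have hidx : (⟨(m.val + (n-1)) % n, Nat.mod_lt _ hn⟩ : Fin n) = ⟨v, hvlt⟩ := by
        ext; show (m.val + (n-1)) % n = v
        rw [hv]
        have : v + 1 + (n - 1) = v + n := by omega
        rw [this, Nat.add_mod_right, Nat.mod_eq_of_lt hvlt]
      have hins : Finset.Iic m = insert m (Finset.Iic ⟨v, hvlt⟩) := by
        ext j
        simp only [Finset.mem_Iic, Finset.mem_insert, Fin.le_def, Fin.ext_iff]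
        omega
      have hnm : m ∉ Finset.Iic (⟨v, hvlt⟩ : Fin n) := by
        simp only [Finset.mem_Iic, Fin.le_def]
        omega
      have hsum : U m = a m + U ⟨v, hvlt⟩ := by
        rw [hUdef]
        show ∑ j ∈ Finset.Iic m, a j = a m + ∑ j ∈ _, a j
        rw [hins, Finset.sum_insert hnm]
      rw [hidx, hsum]
      have : ∀ x y : ZMod 2, x = (x + y) + y := by decide
      exact this _ _
  -- main engine
  have main : ∀ (k : ℕ) (c : ZMod 2), k < n →
      (∀ i : Fin n, U ⟨(i.val + k) % n, Nat.mod_lt _ hn⟩ = U i + c) →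
      shiftL^[k] s = s := by
    intro k c hk hU2
    funext i
    rw [shift_pow hn]
    have key : a ⟨(i.val + k) % n, Nat.mod_lt _ hn⟩ = a i := by
      have h1 := hstep ⟨(i.val + k) % n, Nat.mod_lt _ hn⟩
      have hidx : (⟨((i.val + k) % n + (n-1)) % n, Nat.mod_lt _ hn⟩ : Fin n)
          = ⟨((⟨(i.val + (n-1)) % n, Nat.mod_lt _ hn⟩ : Fin n).val + k) % n, Nat.mod_lt _ hn⟩ := by
        ext
        show ((i.val + k) % n + (n-1)) % n = ((i.val + (n-1)) % n + k) % n
        rw [Nat.mod_add_mod, Nat.mod_add_mod]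
        congr 1
        omega
      rw [hidx] at h1
      rw [h1, hU2 i, hU2 ⟨(i.val + (n-1)) % n, Nat.mod_lt _ hn⟩, hstep i]
      have : ∀ u v c : ZMod 2, (u + c) + (v + c) = u + v := by decide
      exact this _ _ _
    have hb : ∀ b b' : Bool,
        ((if b then (1 : ZMod 2) else 0) = if b' then 1 else 0) → b = b' := by decide
    exact hb _ _ key
  -- translating equalities of xi-strings into U equations
  have conv0 : ∀ (k : ℕ), shiftL^[k] (xi s) = xi s →
      ∀ i : Fin n, U ⟨(i.val + k) % n, Nat.mod_lt _ hn⟩ = U i + 0 := by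
    intro k h i
    have := congrFun h i
    rw [shift_pow hn, hxi, hxi] at this
    rw [decide_eq_decide] at this
    have hz : ∀ u v : ZMod 2, (u = 1 ↔ v = 1) → u = v + 0 := by decide
    exact hz _ _ this
  have conv1 : ∀ (k : ℕ), shiftL^[k] (xi s) = inv (xi s) →
      ∀ i : Fin n, U ⟨(i.val + k) % n, Nat.mod_lt _ hn⟩ = U i + 1 := by
    intro k h i
    have := congrFun h i
    rw [shift_pow hn, hxi] at this
    have hr : (inv (xi s)) i = !(decide (U i = 1)) := by rw [inv, hxi]
    rw [hr] at this
    have hz : ∀ u v : ZMod 2, (decide (u = 1) = !(decide (v = 1))) → u = v + 1 := by decide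
    exact hz _ _ this
  -- Part 1
  have part1 : Primitive (xi s) := by
    intro k hk0 hkn heq
    exact hprim k hk0 hkn (main k 0 hkn (conv0 k heq))
  -- Part 2
  have part2 : ∀ k : ℕ, shiftL^[k] (xi s) ≠ inv (xi s) := by
    intro k heq
    rw [shift_mod hn] at heq
    rcases Nat.eq_zero_or_pos (k % n) with hr | hr
    · rw [hr, Function.iterate_zero_apply] at heq
      have := congrFun heq ⟨0, hn⟩
      rw [inv] at this
      exact absurd this (by cases xi s ⟨0, hn⟩ <;> simp)
    · have hkn : k % n < n := Nat.mod_lt _ hn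
      exact hprim (k % n) hr hkn (main (k % n) 1 hkn (conv1 (k % n) heq))
  refine ⟨part1, part2, ?_⟩
  -- Part 3: cardinality
  have inv_shift : ∀ (k : ℕ) (t : Fin n → Bool), shiftL^[k] (inv t) = inv (shiftL^[k] t) := by
    intro k t
    funext i
    rw [shift_pow hn, inv, inv, shift_pow hn]
  have hcanc : ∀ j k : ℕ, j < n → k < n →
      shiftL^[k] (xi s) = shiftL^[j] (xi s) → k = j := by
    intro j k hj hk h
    have h2 := congrArg (shiftL^[n - j]) h
    rw [← Function.iterate_add_apply, ← Function.iterate_add_apply] at h2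
    have hnj : n - j + j = n := by omega
    rw [hnj] at h2
    have hid : shiftL^[n] (xi s) = xi s := by
      rw [shift_mod hn, Nat.mod_self, Function.iterate_zero_apply]
    rw [hid, shift_mod hn] at h2
    rcases Nat.eq_zero_or_pos ((n - j + k) % n) with hr | hr
    · rcases Nat.lt_or_ge k j with hlt | hge
      · rw [Nat.mod_eq_of_lt (by omega)] at hr; omega
      · rw [Nat.mod_eq_sub_mod (by omega), Nat.mod_eq_of_lt (by omega)] at hr
        omega
    · exact absurd h2 (part1 _ hr (Nat.mod_lt _ hn))
  have hmix : ∀ j k : ℕ, shiftL^[k] (xi s) ≠ inv (shiftL^[j] (xi s)) := by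
    intro j k h
    rw [← inv_shift, shift_mod hn j (inv (xi s))] at h
    have h2 := congrArg (shiftL^[n - j % n]) h
    rw [← Function.iterate_add_apply, ← Function.iterate_add_apply] at h2
    have hnj : n - j % n + j % n = n := by
      have := Nat.mod_lt j hn; omega
    rw [hnj] at h2
    have hid : shiftL^[n] (inv (xi s)) = inv (xi s) := by
      rw [shift_mod hn, Nat.mod_self, Function.iterate_zero_apply]
    rw [hid] at h2
    exact part2 _ h2
  set g : Fin n × Bool → (Fin n → Bool) :=
    fun p => if p.2 then inv (shiftL^[p.1.val] (xi s)) else shiftL^[p.1.val] (xi s) with hg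
  have hinvinj : ∀ u v : Fin n → Bool, inv u = inv v → u = v := by
    intro u v h
    funext i
    have := congrFun h i
    rw [inv, inv] at this
    exact Bool.not_inj this
  have hinj : Function.Injective g := by
    rintro ⟨k, b⟩ ⟨j, b'⟩ h
    cases b <;> cases b' <;> simp only [hg, if_true, if_false, Bool.false_eq_true] at h
    · have := hcanc j.val k.val j.isLt k.isLt h
      exact Prod.ext (Fin.ext this) rfl
    · exact absurd h (hmix _ _)
    · exact absurd h.symm (hmix _ _)
    · have := hcanc j.val k.val j.isLt k.isLt (hinvinj _ _ h)
      exact Prod.ext (Fin.ext this) rfl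
  have hrange : invClass (xi s) = Set.range g := by
    ext t
    constructor
    · rintro ⟨k, h | h⟩
      · refine ⟨(⟨k % n, Nat.mod_lt _ hn⟩, false), ?_⟩
        simp only [hg]
        rw [if_neg (by simp)]
        exact (h.trans (shift_mod hn k (xi s))).symm
      · refine ⟨(⟨k % n, Nat.mod_lt _ hn⟩, true), ?_⟩
        simp only [hg]
        rw [if_pos trivial]
        exact (h.trans (congrArg inv (shift_mod hn k (xi s)))).symm
    · rintro ⟨⟨k, b⟩, rfl⟩
      cases b
      · exact ⟨k.val, Or.inl rfl⟩
      · exact ⟨k.val, Or.inr rfl⟩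
  rw [hrange, ← Set.image_univ, Set.ncard_image_of_injective _ hinj, Set.ncard_univ]
  simp [Nat.card_eq_fintype_card, Nat.mul_comm]

end Necklaces
end

section
/- Suppose n is even and s ∈ {0,1}ⁿ consists of two copies of a primitive string s′ of length n/2 having an odd number of 1's. Then Ξ(s) is primitive, and writing Ξ(s) = (b₁,…,bₙ) one has b_{n/2+i} = ι(b_i) for all 1 ≤ i ≤ n/2; in particular, ι(Ξ(s)) is the cyclic shift of Ξ(s) by n/2. -/
open Finset
set_option maxRecDepth 4000

namespace Necklaces

variable {n : ℕ}

/-- ℕ-indexed version of `s`, periodic mod `n`. -/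
def Sfun (s : Fin n → Bool) : ℕ → Bool :=
  fun m => if h : 0 < n then s ⟨m % n, Nat.mod_lt _ h⟩ else false

/-- number of ones among first `m` digits. -/
def gfun (s : Fin n → Bool) (m : ℕ) : ℕ :=
  ∑ i ∈ Finset.range m, (if Sfun s i then 1 else 0)

/-- ℕ-indexed partial-sum parity. -/
def Bfun (s : Fin n → Bool) (m : ℕ) : Bool := decide (Odd (gfun s m))

lemma Sfun_val (hn : 0 < n) (s : Fin n → Bool) (i : Fin n) : Sfun s i.val = s i := by
  simp only [Sfun, dif_pos hn]
  congr 1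
  exact Fin.ext (Nat.mod_eq_of_lt i.isLt)

lemma shiftL_iterate (hn : 0 < n) (t : Fin n → Bool) (k : ℕ) (i : Fin n) :
    shiftL^[k] t i = t ⟨(i.val + k) % n, Nat.mod_lt _ hn⟩ := by
  induction k generalizing t with
  | zero =>
    simp only [Function.iterate_zero, id]
    congr 1
    exact Fin.ext (Nat.mod_eq_of_lt i.isLt).symm
  | succ k ih =>
    rw [Function.iterate_succ_apply, ih (shiftL t)]
    show t _ = t _
    congr 1
    apply Fin.ext
    show ((i.val + k) % n + 1) % n = (i.val + (k + 1)) % n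
    rw [Nat.mod_add_mod, Nat.add_assoc]

lemma gfun_succ (s : Fin n → Bool) (m : ℕ) :
    gfun s (m + 1) = gfun s m + (if Sfun s m then 1 else 0) :=
  Finset.sum_range_succ _ _

lemma Bfun_succ (s : Fin n → Bool) (m : ℕ) :
    Bfun s (m + 1) = xor (Bfun s m) (Sfun s m) := by
  simp only [Bfun, gfun_succ]
  cases h : Sfun s m <;> simp [Nat.odd_add_one, ← Nat.not_even_iff_odd, Nat.not_odd_iff_even, Nat.even_add_one,
    Bool.xor_false, Bool.xor_true, decide_not]

lemma Sfun_eq_xor (s : Fin n → Bool) (m : ℕ) :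
    Sfun s m = xor (Bfun s (m + 1)) (Bfun s m) := by
  rw [Bfun_succ]
  cases Bfun s m <;> cases Sfun s m <;> rfl

/-- Bridge: counting via `Fin n` filters equals `gfun`. -/
lemma card_filter_lt (hn : 0 < n) (s : Fin n → Bool) (m : ℕ) (hm : m ≤ n) :
    (univ.filter (fun i : Fin n => i.val < m ∧ s i = true)).card = gfun s m := by
  rw [Finset.card_filter]
  have hr : Finset.range m = (Finset.range n).filter (fun i => i < m) := by
    ext x
    simp only [Finset.mem_filter, Finset.mem_range]
    omega
  have h1 : gfun s m = ∑ i ∈ Finset.range n,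
      (if i < m then (if Sfun s i then 1 else 0) else 0) := by
    rw [gfun, hr, Finset.sum_filter]
  rw [h1, ← Fin.sum_univ_eq_sum_range (fun i => if i < m then (if Sfun s i then 1 else 0) else 0) n]
  apply Finset.sum_congr rfl
  intro i _
  rw [Sfun_val hn]
  by_cases h : (i : ℕ) < m
  · cases h2 : s i <;> simp [h, h2]
  · simp [h]

lemma xi_eq_Bfun (hn : 0 < n) (s : Fin n → Bool) (i : Fin n) :
    xi s i = Bfun s (i.val + 1) := by
  have : ((Finset.Iic i).filter (fun j => s j = true)).card
      = (univ.filter (fun j : Fin n => j.val < i.val + 1 ∧ s j = true)).card := by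
    congr 1
    ext j
    simp only [Finset.mem_filter, Finset.mem_Iic, Finset.mem_univ, true_and, Fin.le_def, Nat.lt_succ_iff]
  rw [xi, this, card_filter_lt hn s _ (by omega)]
  rfl


lemma Sfun_period_of_shift (hn : 0 < n) {s : Fin n → Bool} {k : ℕ} (h : shiftL^[k] s = s) :
    ∀ m, Sfun s (m + k) = Sfun s m := by
  intro m
  have h1 := congrFun h ⟨m % n, Nat.mod_lt _ hn⟩
  rw [shiftL_iterate hn] at h1
  simp only [Sfun, dif_pos hn]
  have e1 : ((⟨(m + k) % n, Nat.mod_lt _ hn⟩ : Fin n)) = ⟨(m % n + k) % n, Nat.mod_lt _ hn⟩ :=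
    Fin.ext (Nat.mod_add_mod m n k).symm
  rw [e1]
  exact h1

lemma shift_of_Sfun_period (hn : 0 < n) {s : Fin n → Bool} {k : ℕ}
    (h : ∀ m, Sfun s (m + k) = Sfun s m) : shiftL^[k] s = s := by
  funext i
  rw [shiftL_iterate hn]
  have h1 := h i.val
  simp only [Sfun, dif_pos hn] at h1
  have e : ((⟨i.val % n, Nat.mod_lt _ hn⟩ : Fin n)) = i := Fin.ext (Nat.mod_eq_of_lt i.isLt)
  rw [e] at h1
  exact h1

lemma my_sum_range_add (f : ℕ → ℕ) (a b : ℕ) :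
    ∑ i ∈ Finset.range (a + b), f i
      = (∑ i ∈ Finset.range a, f i) + ∑ i ∈ Finset.range b, f (a + i) := by
  induction b with
  | zero => simp
  | succ b ih =>
    rw [← Nat.add_assoc, Finset.sum_range_succ, ih, Finset.sum_range_succ, Nat.add_assoc]

lemma gfun_add {s : Fin n → Bool} {p : ℕ}
    (hp : ∀ m, Sfun s (m + p) = Sfun s m) (m : ℕ) :
    gfun s (m + p) = gfun s m + gfun s p := by
  have hW : ∀ k, (∑ i ∈ Finset.range p, (if Sfun s (k + i) then 1 else 0))
      = ∑ i ∈ Finset.range p, (if Sfun s i then 1 else 0) := by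
    intro k
    induction k with
    | zero => simp
    | succ k ih =>
      have h1 : ∑ i ∈ Finset.range (p + 1), (if Sfun s (k + i) then 1 else 0)
          = (∑ i ∈ Finset.range p, (if Sfun s (k + (i + 1)) then 1 else 0))
            + (if Sfun s (k + 0) then 1 else 0) :=
        Finset.sum_range_succ' _ _
      have h2 : ∑ i ∈ Finset.range (p + 1), (if Sfun s (k + i) then 1 else 0)
          = (∑ i ∈ Finset.range p, (if Sfun s (k + i) then 1 else 0))
            + (if Sfun s (k + p) then 1 else 0) :=
        Finset.sum_range_succ _ _
      have h3 : Sfun s (k + p) = Sfun s (k + 0) := by rw [Nat.add_zero]; exact hp k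
      have h4 : (∑ i ∈ Finset.range p, (if Sfun s (k + (i + 1)) then 1 else 0))
          = ∑ i ∈ Finset.range p, (if Sfun s (k + i) then 1 else 0) := by
        rw [← h3] at h1
        omega
      calc (∑ i ∈ Finset.range p, (if Sfun s (k + 1 + i) then 1 else 0))
          = ∑ i ∈ Finset.range p, (if Sfun s (k + (i + 1)) then 1 else 0) := by
            apply Finset.sum_congr rfl
            intro x _
            rw [show k + 1 + x = k + (x + 1) by omega]
        _ = ∑ i ∈ Finset.range p, (if Sfun s (k + i) then 1 else 0) := h4
        _ = _ := ih
  unfold gfun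
  rw [my_sum_range_add, hW m]

/-- Suppose `n` is even and `s ∈ {0,1}ⁿ` consists of two copies of a
primitive string of length `n/2` with an odd number of 1's. Then `Ξ(s)` is primitive,
its digit at position `n/2 + i` is the complement of its digit at position `i`
(for `1 ≤ i ≤ n/2`), and `ι(Ξ(s))` is the cyclic shift of `Ξ(s)` by `n/2`. -/
theorem xi_of_two_copies (n : ℕ) (s : Fin n → Bool)
    (hev : n % 2 = 0)
    (hper : shiftL^[n / 2] s = s)
    (hhalfprim : ∀ k : ℕ, 0 < k → k < n / 2 → shiftL^[k] s ≠ s)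
    (hodd : Odd ((Finset.univ.filter (fun i : Fin n => i.val < n / 2 ∧ s i = true)).card)) :
    Primitive (xi s) ∧
    (∀ (j : ℕ) (hj : j < n / 2),
      xi s ⟨j + n / 2, by omega⟩ = !(xi s ⟨j, by omega⟩)) ∧
    shiftL^[n / 2] (xi s) = inv (xi s) := by
  have h0 : 0 < n / 2 := by
    rcases hodd with ⟨c, hc⟩
    have hpos : 0 < (Finset.univ.filter (fun i : Fin n => i.val < n / 2 ∧ s i = true)).card := by
      omega
    obtain ⟨i, hi⟩ := Finset.card_pos.mp hpos
    have := (Finset.mem_filter.mp hi).2.1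
    omega
  have hn : 0 < n := lt_of_lt_of_le h0 (Nat.div_le_self n 2)
  have hpS : ∀ m, Sfun s (m + n / 2) = Sfun s m := Sfun_period_of_shift hn hper
  have hg : ∀ m, gfun s (m + n / 2) = gfun s m + gfun s (n / 2) := gfun_add hpS
  have hgodd : Odd (gfun s (n / 2)) := by
    rw [← card_filter_lt hn s _ (by omega)]
    exact hodd
  -- Part 2
  have part2 : ∀ (j : ℕ) (hj : j < n / 2),
      xi s ⟨j + n / 2, by omega⟩ = !(xi s ⟨j, by omega⟩) := by
    intro j hj
    rw [xi_eq_Bfun hn, xi_eq_Bfun hn]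
    show Bfun s (j + n / 2 + 1) = !Bfun s (j + 1)
    rw [show j + n / 2 + 1 = (j + 1) + n / 2 by omega]
    simp only [Bfun, hg (j + 1)]
    rcases Nat.even_or_odd (gfun s (j + 1)) with he | ho
    · have e1 : Odd (gfun s (j + 1) + gfun s (n / 2)) := he.add_odd hgodd
      have e2 : ¬ Odd (gfun s (j + 1)) := Nat.not_odd_iff_even.mpr he
      simp [e1, e2]
    · have e1 : ¬ Odd (gfun s (j + 1) + gfun s (n / 2)) :=
        Nat.not_odd_iff_even.mpr (ho.add_odd hgodd)
      simp [e1, ho]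
  -- Part 3
  have part3 : shiftL^[n / 2] (xi s) = inv (xi s) := by
    funext i
    rw [shiftL_iterate hn]
    show xi s _ = !(xi s i)
    by_cases hi : i.val < n / 2
    · have e : (⟨(i.val + n / 2) % n, Nat.mod_lt _ hn⟩ : Fin n) = ⟨i.val + n / 2, by omega⟩ :=
        Fin.ext (Nat.mod_eq_of_lt (by omega))
      rw [e, part2 i.val hi]
    · have hjlt : i.val - n / 2 < n / 2 := by omega
      have e : (⟨(i.val + n / 2) % n, Nat.mod_lt _ hn⟩ : Fin n)
          = ⟨i.val - n / 2, by omega⟩ := by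
        apply Fin.ext
        show (i.val + n / 2) % n = i.val - n / 2
        have : i.val + n / 2 = (i.val - n / 2) + n := by omega
        rw [this, Nat.add_mod_right, Nat.mod_eq_of_lt (by omega)]
      have h2 := part2 (i.val - n / 2) hjlt
      have hi2 : i = ⟨i.val - n / 2 + n / 2, by omega⟩ :=
        Fin.ext (show i.val = i.val - n / 2 + n / 2 by omega)
      rw [e]
      conv_rhs => rw [hi2]
      rw [h2, Bool.not_not]
  -- Part 1
  refine ⟨?_, part2, part3⟩
  intro k hk0 hkn heq
  have hBn : ∀ m, Bfun s (m + n) = Bfun s m := by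
    intro m
    have hgn : gfun s (m + n) = gfun s m + gfun s (n / 2) + gfun s (n / 2) := by
      rw [show m + n = m + n / 2 + n / 2 by omega, hg, hg]
    simp only [Bfun]
    apply decide_eq_decide.mpr
    rw [Nat.odd_iff, Nat.odd_iff, hgn]
    rcases hgodd with ⟨c, hc⟩
    omega
  have hBmod : ∀ m, Bfun s m = Bfun s (m % n) := by
    have hmul : ∀ t m, Bfun s (m + t * n) = Bfun s m := by
      intro t
      induction t with
      | zero => simp
      | succ t ih =>
        intro m
        rw [show m + (t + 1) * n = m + t * n + n by ring, hBn, ih]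
    intro m
    calc Bfun s m = Bfun s (m % n + m / n * n) := by rw [Nat.mod_add_div']
      _ = Bfun s (m % n) := hmul _ _
  have hBk : ∀ m, Bfun s (m + k) = Bfun s m := by
    intro m
    set iv := (m + (n - 1)) % n with hiv
    have hivlt : iv < n := Nat.mod_lt _ hn
    have h1 := congrFun heq (⟨iv, hivlt⟩ : Fin n)
    rw [shiftL_iterate hn] at h1
    rw [xi_eq_Bfun hn, xi_eq_Bfun hn] at h1
    -- h1 : Bfun s ((iv + k) % n + 1) = Bfun s (iv + 1)
    have e1 : ((iv + k) % n + 1) % n = (m + k) % n := by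
      rw [Nat.mod_add_mod]
      have : iv + k + 1 = ((m + (n - 1)) % n) + (k + 1) := by omega
      rw [this, Nat.mod_add_mod, show m + (n - 1) + (k + 1) = (m + k) + n by omega,
        Nat.add_mod_right]
    have e2 : (iv + 1) % n = m % n := by
      rw [hiv, Nat.mod_add_mod, show m + (n - 1) + 1 = m + n by omega, Nat.add_mod_right]
    calc Bfun s (m + k) = Bfun s ((m + k) % n) := hBmod _
      _ = Bfun s (((iv + k) % n + 1) % n) := by rw [e1]
      _ = Bfun s ((iv + k) % n + 1) := (hBmod _).symm
      _ = Bfun s (iv + 1) := h1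
      _ = Bfun s ((iv + 1) % n) := hBmod _
      _ = Bfun s (m % n) := by rw [e2]
      _ = Bfun s m := (hBmod _).symm
  have hSk : ∀ m, Sfun s (m + k) = Sfun s m := by
    intro m
    rw [Sfun_eq_xor, Sfun_eq_xor, show m + k + 1 = (m + 1) + k by ring, hBk, hBk]
  have hsk : shiftL^[k] s = s := shift_of_Sfun_period hn hSk
  rcases lt_trichotomy k (n / 2) with hlt | heqk | hgt
  · exact hhalfprim k hk0 hlt hsk
  · rw [heqk, part3] at heq
    have := congrFun heq ⟨0, hn⟩
    exact Bool.not_ne_self _ this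
  · have hSk' : ∀ m, Sfun s (m + (k - n / 2)) = Sfun s m := by
      intro m
      have h1 := hpS (m + (k - n / 2))
      rw [show m + (k - n / 2) + n / 2 = m + k by omega, hSk] at h1
      exact h1.symm
    exact hhalfprim (k - n / 2) (by omega) (by omega) (shift_of_Sfun_period hn hSk')


end Necklaces
end

section
/- A cyclic unimodal permutation of {1,…,n} is uniquely determined by its itinerary: if σ₁ and σ₂ are cyclic unimodal permutations of {1,…,n} with Itin(σ₁) = Itin(σ₂), then σ₁ = σ₂. -/
open Finset

namespace Necklaces

section Aux

variable {n : ℕ} [NeZero n]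

private def mpt (σ : Equiv.Perm (Fin n)) : Fin n := σ⁻¹ 0
private def pt (σ : Equiv.Perm (Fin n)) (k : ℕ) : Fin n := (σ ^ k) (mpt σ)

private lemma pt_succ (σ : Equiv.Perm (Fin n)) (k : ℕ) : pt σ (k + 1) = σ (pt σ k) := by
  rw [pt, pt, pow_succ']; rfl

private lemma valley_eq {σ : Equiv.Perm (Fin n)} {m' : Fin n}
    (hdec : ∀ i j : Fin n, i ≤ j → j ≤ m' → σ j ≤ σ i)
    (hinc : ∀ i j : Fin n, m' ≤ i → i ≤ j → σ i ≤ σ j) : m' = mpt σ := by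
  have hle : ∀ x, σ m' ≤ σ x := by
    intro x
    rcases le_total x m' with hx | hx
    · exact hdec x m' hx le_rfl
    · exact hinc m' x le_rfl hx
  have h0 : σ m' = 0 := le_antisymm (by simpa using hle (σ⁻¹ 0)) (Fin.zero_le _)
  have := congrArg (⇑σ⁻¹) h0
  simpa [mpt] using this

private lemma dec_strict {σ : Equiv.Perm (Fin n)} (hc : CUPperm σ) :
    ∀ x y : Fin n, x < y → y ≤ mpt σ → σ y < σ x := by
  obtain ⟨m', hdec, hinc⟩ := hc.2
  have hm := valley_eq hdec hinc
  intro x y hxy hy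
  have hle : σ y ≤ σ x := hdec x y hxy.le (hm ▸ hy)
  exact hle.lt_of_ne fun he => hxy.ne' (σ.injective he)

private lemma inc_strict {σ : Equiv.Perm (Fin n)} (hc : CUPperm σ) :
    ∀ x y : Fin n, mpt σ ≤ x → x < y → σ x < σ y := by
  obtain ⟨m', hdec, hinc⟩ := hc.2
  have hm := valley_eq hdec hinc
  intro x y hx hxy
  have hle : σ x ≤ σ y := hinc x y (hm ▸ hx) hxy.le
  exact hle.lt_of_ne fun he => hxy.ne (σ.injective he)

private lemma pow_fix {σ : Equiv.Perm (Fin n)} (hc : CUPperm σ) {k : ℕ}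
    (hk : (σ ^ k) (mpt σ) = mpt σ) : σ ^ k = 1 := by
  ext y
  obtain ⟨j, hj⟩ := hc.1 (mpt σ) y
  have hcomm : (σ ^ k) ((σ ^ j) (mpt σ)) = (σ ^ j) ((σ ^ k) (mpt σ)) := by
    rw [← Equiv.Perm.mul_apply, ← Equiv.Perm.mul_apply, ← pow_add, ← pow_add, add_comm]
  rw [Equiv.Perm.one_apply, ← hj, hcomm, hk]

private lemma period_aux {σ : Equiv.Perm (Fin n)} (hc : CUPperm σ) {p : ℕ}
    (hppos : 0 < p) (hpfix : (σ ^ p) (mpt σ) = mpt σ)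
    (hmin : ∀ k, 0 < k → k < p → (σ ^ k) (mpt σ) ≠ mpt σ) : p = n := by
  have hσp : σ ^ p = 1 := pow_fix hc hpfix
  have hauxinj : ∀ a b : ℕ, a ≤ b → b < p → (σ ^ a) (mpt σ) = (σ ^ b) (mpt σ) → a = b := by
    intro a b hab hbp he
    by_contra hne
    have hd : 0 < b - a := by omega
    have : (σ ^ a) ((σ ^ (b - a)) (mpt σ)) = (σ ^ a) (mpt σ) := by
      rw [← Equiv.Perm.mul_apply, ← pow_add]
      rw [show a + (b - a) = b from by omega, he]
    exact hmin (b - a) hd (by omega) ((σ ^ a).injective this)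
  have hinj : Function.Injective (fun a : Fin p => (σ ^ (a : ℕ)) (mpt σ)) := by
    intro a b he
    rcases le_total (a : ℕ) (b : ℕ) with hab | hab
    · exact Fin.ext (hauxinj a b hab b.isLt he)
    · exact Fin.ext ((hauxinj b a hab a.isLt he.symm).symm)
  have hsurj : Function.Surjective (fun a : Fin p => (σ ^ (a : ℕ)) (mpt σ)) := by
    intro y
    obtain ⟨k, hk⟩ := hc.1 (mpt σ) y
    refine ⟨⟨k % p, Nat.mod_lt _ hppos⟩, ?_⟩
    have hkeq : σ ^ k = σ ^ (k % p) := by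
      conv_lhs => rw [← Nat.mod_add_div k p]
      rw [pow_add, pow_mul, hσp, one_pow, mul_one]
    simpa [← hkeq] using hk
  have h1 : p ≤ n := by simpa using Fintype.card_le_of_injective _ hinj
  have h2 : n ≤ p := by simpa using Fintype.card_le_of_surjective _ hsurj
  omega

/-- `n` is the minimal period. -/
private lemma period {σ : Equiv.Perm (Fin n)} (hc : CUPperm σ) :
    (σ ^ n) (mpt σ) = mpt σ ∧ ∀ k, 0 < k → k < n → (σ ^ k) (mpt σ) ≠ mpt σ := by
  have hex : ∃ k, 0 < k ∧ (σ ^ k) (mpt σ) = mpt σ :=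
    ⟨orderOf σ, orderOf_pos σ, by rw [pow_orderOf_eq_one]; rfl⟩
  obtain ⟨hppos, hpfix⟩ := Nat.find_spec hex
  have hmin : ∀ k, 0 < k → k < Nat.find hex → (σ ^ k) (mpt σ) ≠ mpt σ := fun k h1 h2 he =>
    Nat.find_min hex h2 ⟨h1, he⟩
  have hpn : Nat.find hex = n := period_aux hc hppos hpfix hmin
  refine ⟨?_, ?_⟩
  · rw [show σ ^ n = σ ^ Nat.find hex from by rw [hpn]]
    exact hpfix
  · intro k h1 h2
    exact hmin k h1 (by omega)

private lemma fix_iff {σ : Equiv.Perm (Fin n)} (hc : CUPperm σ) (k : ℕ) :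
    (σ ^ k) (mpt σ) = mpt σ ↔ n ∣ k := by
  obtain ⟨hfix, hmin⟩ := period hc
  have hσn : σ ^ n = 1 := pow_fix hc hfix
  have hn : 0 < n := Nat.pos_of_ne_zero (NeZero.ne n)
  constructor
  · intro hk
    have hkeq : σ ^ k = σ ^ (k % n) := by
      conv_lhs => rw [← Nat.mod_add_div k n]
      rw [pow_add, pow_mul, hσn, one_pow, mul_one]
    rw [hkeq] at hk
    rcases Nat.eq_zero_or_pos (k % n) with h0 | hpos
    · exact Nat.dvd_of_mod_eq_zero h0
    · exact absurd hk (hmin _ hpos (Nat.mod_lt _ hn))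
  · rintro ⟨q, rfl⟩
    rw [pow_mul, hσn, one_pow]; rfl

private lemma pt_mod {σ : Equiv.Perm (Fin n)} (hc : CUPperm σ) (k : ℕ) :
    pt σ k = pt σ (k % n) := by
  obtain ⟨hfix, -⟩ := period hc
  have hσn : σ ^ n = 1 := pow_fix hc hfix
  rw [pt, pt]
  congr 1
  conv_lhs => rw [← Nat.mod_add_div k n]
  rw [pow_add, pow_mul, hσn, one_pow, mul_one]

private lemma pt_eq_iff {σ : Equiv.Perm (Fin n)} (hc : CUPperm σ) (a b : ℕ) :
    pt σ a = pt σ b ↔ a % n = b % n := by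
  have hn : 0 < n := Nat.pos_of_ne_zero (NeZero.ne n)
  have haux : ∀ c d : ℕ, c ≤ d → d < n → pt σ c = pt σ d → c = d := by
    intro c d hcd hdn he
    have : (σ ^ c) ((σ ^ (d - c)) (mpt σ)) = (σ ^ c) (mpt σ) := by
      rw [← Equiv.Perm.mul_apply, ← pow_add, show c + (d - c) = d from by omega]
      exact he.symm
    have hfx := (σ ^ c).injective this
    have hdvd := (fix_iff hc (d - c)).mp hfx
    rcases Nat.eq_zero_of_dvd_of_lt hdvd (by omega) with h0
    omega
  constructor
  · intro he
    rw [pt_mod hc a, pt_mod hc b] at he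
    rcases le_total (a % n) (b % n) with hab | hab
    · exact haux _ _ hab (Nat.mod_lt _ hn) he
    · exact (haux _ _ hab (Nat.mod_lt _ hn) he.symm).symm
  · intro he
    rw [pt_mod hc a, pt_mod hc b, he]

private lemma dig_eq {σ₁ σ₂ : Equiv.Perm (Fin n)} (hc₁ : CUPperm σ₁) (hc₂ : CUPperm σ₂)
    (h : itin σ₁ = itin σ₂) {k : ℕ} (hk : ¬ n ∣ k) :
    (pt σ₁ k < mpt σ₁ ↔ pt σ₂ k < mpt σ₂) := by
  have hn : 0 < n := Nat.pos_of_ne_zero (NeZero.ne n)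
  set e := k % n with hedef
  have he1 : 0 < e := Nat.pos_of_ne_zero fun h0 => hk (Nat.dvd_of_mod_eq_zero h0)
  have he2 : e < n := Nat.mod_lt _ hn
  have hidx : e - 1 < n := by omega
  have hcf := congrFun h ⟨e - 1, hidx⟩
  rw [itin, itin] at hcf
  have hne : ¬ ((⟨e - 1, hidx⟩ : Fin n).val + 1 = n) := by simpa using by omega
  rw [if_neg hne, if_neg hne] at hcf
  have hdig : ((σ₁ ^ ((e - 1) + 1)) (σ₁⁻¹ 0) < σ₁⁻¹ 0) ↔ ((σ₂ ^ ((e - 1) + 1)) (σ₂⁻¹ 0) < σ₂⁻¹ 0) := by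
    have := Option.some_injective _ hcf
    simpa using decide_eq_decide.mp this
  have hee : e - 1 + 1 = e := by omega
  rw [hee] at hdig
  have hp₁ : pt σ₁ k = pt σ₁ e := pt_mod hc₁ k
  have hp₂ : pt σ₂ k = pt σ₂ e := pt_mod hc₂ k
  rw [hp₁, hp₂]
  exact hdig

private lemma step_dec {σ : Equiv.Perm (Fin n)} (hc : CUPperm σ) {i j : ℕ}
    (hi : pt σ i < mpt σ) (hj : pt σ j < mpt σ) :
    (pt σ i < pt σ j ↔ pt σ (j + 1) < pt σ (i + 1)) := by
  have key : ∀ a b : ℕ, pt σ a < pt σ b → pt σ b ≤ mpt σ → pt σ (b + 1) < pt σ (a + 1) := by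
    intro a b hab hbm
    rw [pt_succ, pt_succ]
    exact dec_strict hc _ _ hab hbm
  constructor
  · intro hlt; exact key i j hlt hj.le
  · intro hlt
    rcases lt_trichotomy (pt σ i) (pt σ j) with h' | h' | h'
    · exact h'
    · exfalso
      rw [pt_succ, pt_succ, h'] at hlt
      exact lt_irrefl _ hlt
    · exact absurd (key j i h' hi.le) (asymm hlt)

private lemma step_inc {σ : Equiv.Perm (Fin n)} (hc : CUPperm σ) {i j : ℕ}
    (hi : mpt σ < pt σ i) (hj : mpt σ < pt σ j) :
    (pt σ i < pt σ j ↔ pt σ (i + 1) < pt σ (j + 1)) := by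
  have key : ∀ a b : ℕ, pt σ a < pt σ b → mpt σ ≤ pt σ a → pt σ (a + 1) < pt σ (b + 1) := by
    intro a b hab ham
    rw [pt_succ, pt_succ]
    exact inc_strict hc _ _ ham hab
  constructor
  · intro hlt; exact key i j hlt hi.le
  · intro hlt
    rcases lt_trichotomy (pt σ i) (pt σ j) with h' | h' | h'
    · exact h'
    · exfalso
      rw [pt_succ, pt_succ, h'] at hlt
      exact lt_irrefl _ hlt
    · exact absurd (key j i h' hj.le) (asymm hlt)

private lemma base_lt {σ₁ σ₂ : Equiv.Perm (Fin n)} (hc₁ : CUPperm σ₁) (hc₂ : CUPperm σ₂)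
    (h : itin σ₁ = itin σ₂) {i : ℕ} (hi : n ∣ i) (j : ℕ) :
    (pt σ₁ i < pt σ₁ j ↔ pt σ₂ i < pt σ₂ j) := by
  have e₁ : pt σ₁ i = mpt σ₁ := (fix_iff hc₁ i).mpr hi
  have e₂ : pt σ₂ i = mpt σ₂ := (fix_iff hc₂ i).mpr hi
  by_cases hj : n ∣ j
  · have f₁ : pt σ₁ j = mpt σ₁ := (fix_iff hc₁ j).mpr hj
    have f₂ : pt σ₂ j = mpt σ₂ := (fix_iff hc₂ j).mpr hj
    rw [e₁, f₁, e₂, f₂]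
    simp
  · have d := dig_eq hc₁ hc₂ h hj
    have ne₁ : pt σ₁ j ≠ mpt σ₁ := fun he => hj ((fix_iff hc₁ j).mp he)
    have ne₂ : pt σ₂ j ≠ mpt σ₂ := fun he => hj ((fix_iff hc₂ j).mp he)
    rw [e₁, e₂]
    constructor
    · intro hlt
      exact ne₂.lt_or_gt.resolve_left (fun hx => (d.mpr hx).not_gt hlt)
    · intro hlt
      exact ne₁.lt_or_gt.resolve_left (fun hx => (d.mp hx).not_gt hlt)

private lemma flip_lt {α β : Type*} [LinearOrder α] [LinearOrder β] {a b : α} {c d : β}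
    (h1 : a < b ↔ c < d) (h2 : a = b ↔ c = d) : b < a ↔ d < c := by
  rcases lt_trichotomy a b with h | h | h
  · simp [asymm h, asymm (h1.mp h)]
  · simp [h.not_lt, (h2.mp h).not_lt, h, h2.mp h]
  · have hc : d < c := by
      rcases lt_trichotomy c d with h' | h' | h'
      · exact absurd (h1.mpr h') (asymm h)
      · exact absurd (h2.mpr h') (ne_of_gt h)
      · exact h'
    simp [h, hc]

private lemma main_lt {σ₁ σ₂ : Equiv.Perm (Fin n)} (hc₁ : CUPperm σ₁) (hc₂ : CUPperm σ₂)
    (h : itin σ₁ = itin σ₂) :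
    ∀ t i j : ℕ, n ∣ (i + t) → (pt σ₁ i < pt σ₁ j ↔ pt σ₂ i < pt σ₂ j) := by
  intro t
  induction t with
  | zero =>
    intro i j hi
    exact base_lt hc₁ hc₂ h (by simpa using hi) j
  | succ t ih =>
    intro i j hdvd
    by_cases hi : n ∣ i
    · exact base_lt hc₁ hc₂ h hi j
    by_cases hj : n ∣ j
    · have f₁ : pt σ₁ j = mpt σ₁ := (fix_iff hc₁ j).mpr hj
      have f₂ : pt σ₂ j = mpt σ₂ := (fix_iff hc₂ j).mpr hj
      rw [f₁, f₂]
      exact dig_eq hc₁ hc₂ h hi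
    · have di := dig_eq hc₁ hc₂ h hi
      have dj := dig_eq hc₁ hc₂ h hj
      have nei₁ : pt σ₁ i ≠ mpt σ₁ := fun he => hi ((fix_iff hc₁ i).mp he)
      have nei₂ : pt σ₂ i ≠ mpt σ₂ := fun he => hi ((fix_iff hc₂ i).mp he)
      have nej₁ : pt σ₁ j ≠ mpt σ₁ := fun he => hj ((fix_iff hc₁ j).mp he)
      have nej₂ : pt σ₂ j ≠ mpt σ₂ := fun he => hj ((fix_iff hc₂ j).mp he)
      have ihlt : pt σ₁ (i + 1) < pt σ₁ (j + 1) ↔ pt σ₂ (i + 1) < pt σ₂ (j + 1) :=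
        ih (i + 1) (j + 1) (by rw [show i + 1 + t = i + (t + 1) from by omega]; exact hdvd)
      by_cases Di : pt σ₁ i < mpt σ₁
      · by_cases Dj : pt σ₁ j < mpt σ₁
        · have iheq : pt σ₁ (i + 1) = pt σ₁ (j + 1) ↔ pt σ₂ (i + 1) = pt σ₂ (j + 1) := by
            rw [pt_eq_iff hc₁, pt_eq_iff hc₂]
          have hflip := flip_lt ihlt iheq
          rw [step_dec hc₁ Di Dj, step_dec hc₂ (di.mp Di) (dj.mp Dj)]
          exact hflip
        · have Dj' : mpt σ₁ < pt σ₁ j := nej₁.lt_or_gt.resolve_left Dj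
          have Dj₂ : mpt σ₂ < pt σ₂ j := nej₂.lt_or_gt.resolve_left (fun hx => Dj (dj.mpr hx))
          exact iff_of_true (Di.trans Dj') ((di.mp Di).trans Dj₂)
      · by_cases Dj : pt σ₁ j < mpt σ₁
        · have Di' : mpt σ₁ < pt σ₁ i := nei₁.lt_or_gt.resolve_left Di
          have Di₂ : mpt σ₂ < pt σ₂ i := nei₂.lt_or_gt.resolve_left (fun hx => Di (di.mpr hx))
          have Dj₂ : pt σ₂ j < mpt σ₂ := dj.mp Dj
          exact iff_of_false (asymm (Dj.trans Di')) (asymm (Dj₂.trans Di₂))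
        · have Di' : mpt σ₁ < pt σ₁ i := nei₁.lt_or_gt.resolve_left Di
          have Dj' : mpt σ₁ < pt σ₁ j := nej₁.lt_or_gt.resolve_left Dj
          have Di₂ : mpt σ₂ < pt σ₂ i := nei₂.lt_or_gt.resolve_left (fun hx => Di (di.mpr hx))
          have Dj₂ : mpt σ₂ < pt σ₂ j := nej₂.lt_or_gt.resolve_left (fun hx => Dj (dj.mpr hx))
          rw [step_inc hc₁ Di' Dj', step_inc hc₂ Di₂ Dj₂]
          exact ihlt

private lemma all_lt {σ₁ σ₂ : Equiv.Perm (Fin n)} (hc₁ : CUPperm σ₁) (hc₂ : CUPperm σ₂)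
    (h : itin σ₁ = itin σ₂) (i j : ℕ) :
    (pt σ₁ i < pt σ₁ j ↔ pt σ₂ i < pt σ₂ j) := by
  have hn : 0 < n := Nat.pos_of_ne_zero (NeZero.ne n)
  have hle : i + 1 ≤ n * (i + 1) := Nat.le_mul_of_pos_left (i + 1) hn
  have he : i + (n * (i + 1) - i) = n * (i + 1) := by omega
  exact main_lt hc₁ hc₂ h (n * (i + 1) - i) i j (by rw [he]; exact dvd_mul_right n (i + 1))

private lemma pt_agree {σ₁ σ₂ : Equiv.Perm (Fin n)} (hc₁ : CUPperm σ₁) (hc₂ : CUPperm σ₂)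
    (h : itin σ₁ = itin σ₂) : ∀ k : ℕ, pt σ₁ k = pt σ₂ k := by
  have hn : 0 < n := Nat.pos_of_ne_zero (NeZero.ne n)
  set g₁ : Fin n → Fin n := fun a => pt σ₁ a.val with hg₁
  set g₂ : Fin n → Fin n := fun a => pt σ₂ a.val with hg₂
  have hinj : ∀ (σ : Equiv.Perm (Fin n)), CUPperm σ →
      Function.Injective (fun a : Fin n => pt σ a.val) := by
    intro σ hc a b hab
    have := (pt_eq_iff hc a.val b.val).mp hab
    rw [Nat.mod_eq_of_lt a.isLt, Nat.mod_eq_of_lt b.isLt] at this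
    exact Fin.ext this
  have hbij₁ : Function.Bijective g₁ := Finite.injective_iff_bijective.mp (hinj σ₁ hc₁)
  have hbij₂ : Function.Bijective g₂ := Finite.injective_iff_bijective.mp (hinj σ₂ hc₂)
  set E₁ := Equiv.ofBijective g₁ hbij₁ with hE₁
  set E₂ := Equiv.ofBijective g₂ hbij₂ with hE₂
  have hψ : StrictMono (fun x => E₂ (E₁.symm x)) := by
    intro x y hxy
    have hx : g₁ (E₁.symm x) = x := E₁.apply_symm_apply x
    have hy : g₁ (E₁.symm y) = y := E₁.apply_symm_apply y
    have : pt σ₁ (E₁.symm x).val < pt σ₁ (E₁.symm y).val := by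
      show g₁ _ < g₁ _
      rw [hx, hy]; exact hxy
    exact (all_lt hc₁ hc₂ h _ _).mp this
  have hrange : Set.range (fun x => E₂ (E₁.symm x)) = Set.range (id : Fin n → Fin n) := by
    rw [Set.range_id]
    exact Set.range_eq_univ.mpr fun y => ⟨E₁ (E₂.symm y), by simp⟩
  have hid : (fun x => E₂ (E₁.symm x)) = id := (hψ.range_inj strictMono_id).mp hrange
  have hgeq : g₁ = g₂ := by
    funext a
    have := congrFun hid (g₁ a)
    simp only [id] at this
    have ha : E₁.symm (g₁ a) = a := E₁.symm_apply_apply a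
    rw [ha] at this
    exact this.symm
  intro k
  have h₁ : pt σ₁ k = g₁ ⟨k % n, Nat.mod_lt _ hn⟩ := pt_mod hc₁ k
  have h₂ : pt σ₂ k = g₂ ⟨k % n, Nat.mod_lt _ hn⟩ := pt_mod hc₂ k
  rw [h₁, h₂, hgeq]

end Aux

/-- A cyclic unimodal permutation of `{1,…,n}` is uniquely determined by
its itinerary. -/
theorem itinerary_determines_CUP (n : ℕ) [NeZero n] (σ₁ σ₂ : Equiv.Perm (Fin n))
    (h₁ : CUPperm σ₁) (h₂ : CUPperm σ₂) (h : itin σ₁ = itin σ₂) : σ₁ = σ₂ := by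

  have hagree := pt_agree h₁ h₂ h
  apply Equiv.ext
  intro x
  obtain ⟨k, hk⟩ := h₁.1 (mpt σ₁) x
  have hx₁ : x = pt σ₁ k := hk.symm
  have hx₂ : x = pt σ₂ k := by rw [hx₁, hagree k]
  rw [hx₁]
  calc σ₁ (pt σ₁ k) = pt σ₁ (k + 1) := (pt_succ σ₁ k).symm
    _ = pt σ₂ (k + 1) := hagree (k + 1)
    _ = σ₂ (pt σ₂ k) := pt_succ σ₂ k
    _ = σ₂ (pt σ₁ k) := by rw [← hx₂, ← hx₁]

end Necklaces
end
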